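/- Let Q be a symmetric real n×n matrix with zero diagonal and b ∈ ℝⁿ, and let f(x) = xᵀQx + bᵀx. Then the minimum of f over the solid hypercube [0,1]ⁿ is attained at a binary vertex: there exists p ∈ {0,1}ⁿ such that f(p) ≤ f(x) for all x ∈ [0,1]ⁿ. In particular the minimum of f over [0,1]ⁿ equals the minimum of f over {0,1}ⁿ. -/

import Mathlib

open Finset

private lemma ubqp_expand (n : ℕ) (Q : Matrix (Fin n) (Fin n) ℝ)
    (hQdiag : ∀ i, Q i i = 0) (b : Fin n → ℝ)
    (f : (Fin n → ℝ) → ℝ)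
    (hf : ∀ x, f x = (∑ i, ∑ j, Q i j * x i * x j) + ∑ i, b i * x i)
    (x : Fin n → ℝ) (i : Fin n) (t : ℝ) :
    f (Function.update x i t) =
      t * ((∑ k ∈ univ.erase i, Q i k * x k) + (∑ j ∈ univ.erase i, Q j i * x j) + b i)
      + ((∑ j ∈ univ.erase i, ∑ k ∈ univ.erase i, Q j k * x j * x k)
         + ∑ j ∈ univ.erase i, b j * x j) := by
  rw [hf]
  set y := Function.update x i t with hy
  have hyi : y i = t := Function.update_self _ _ _
  have hyj : ∀ j ∈ univ.erase i, y j = x j := by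
    intro j hj
    exact Function.update_of_ne (Finset.ne_of_mem_erase hj) _ _
  have key : ∀ (g : Fin n → ℝ), ∑ j, g j = (∑ j ∈ univ.erase i, g j) + g i :=
    fun g => (Finset.sum_erase_add _ _ (Finset.mem_univ i)).symm
  rw [key (fun j => ∑ k, Q j k * y j * y k), key (fun j => b j * y j)]
  rw [key (fun k => Q i k * y i * y k)]
  have h1 : ∀ j ∈ univ.erase i, (∑ k, Q j k * y j * y k)
      = (∑ k ∈ univ.erase i, Q j k * x j * x k) + Q j i * x j * t := by
    intro j hj
    rw [key (fun k => Q j k * y j * y k)]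
    congr 1
    · exact Finset.sum_congr rfl fun k hk => by rw [hyj j hj, hyj k hk]
    · rw [hyj j hj, hyi]
  rw [Finset.sum_congr rfl h1, Finset.sum_add_distrib]
  have h2 : (∑ k ∈ univ.erase i, Q i k * y i * y k)
      = ∑ k ∈ univ.erase i, t * (Q i k * x k) := by
    refine Finset.sum_congr rfl fun k hk => ?_
    rw [hyi, hyj k hk]; ring
  have h3 : (∑ j ∈ univ.erase i, b j * y j) = ∑ j ∈ univ.erase i, b j * x j :=
    Finset.sum_congr rfl fun j hj => by rw [hyj j hj]
  rw [h2, h3, hyi, hQdiag i, ← Finset.mul_sum]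
  have h4 : (∑ j ∈ univ.erase i, Q j i * x j * t) = t * ∑ j ∈ univ.erase i, Q j i * x j := by
    rw [Finset.mul_sum]; exact Finset.sum_congr rfl fun j _ => by ring
  rw [h4]
  ring

private lemma ubqp_round_one (n : ℕ) (Q : Matrix (Fin n) (Fin n) ℝ)
    (hQdiag : ∀ i, Q i i = 0) (b : Fin n → ℝ)
    (f : (Fin n → ℝ) → ℝ)
    (hf : ∀ x, f x = (∑ i, ∑ j, Q i j * x i * x j) + ∑ i, b i * x i)
    (x : Fin n → ℝ) (i : Fin n) (hx : x i ∈ Set.Icc (0 : ℝ) 1) :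
    ∃ t : ℝ, (t = 0 ∨ t = 1) ∧ f (Function.update x i t) ≤ f x := by
  obtain ⟨hx0, hx1⟩ := hx
  have hX : f x = f (Function.update x i (x i)) := by rw [Function.update_eq_self]
  set B := ((∑ k ∈ univ.erase i, Q i k * x k) + (∑ j ∈ univ.erase i, Q j i * x j) + b i) with hB
  set A := ((∑ j ∈ univ.erase i, ∑ k ∈ univ.erase i, Q j k * x j * x k)
      + ∑ j ∈ univ.erase i, b j * x j) with hA
  have hexp : ∀ t : ℝ, f (Function.update x i t) = t * B + A :=
    fun t => ubqp_expand n Q hQdiag b f hf x i t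
  rcases le_or_gt 0 B with hB0 | hB0
  · exact ⟨0, Or.inl rfl, by rw [hexp 0, hX, hexp (x i)]; nlinarith⟩
  · exact ⟨1, Or.inr rfl, by rw [hexp 1, hX, hexp (x i)]; nlinarith⟩

private lemma ubqp_round_all (n : ℕ) (Q : Matrix (Fin n) (Fin n) ℝ)
    (hQdiag : ∀ i, Q i i = 0) (b : Fin n → ℝ)
    (f : (Fin n → ℝ) → ℝ)
    (hf : ∀ x, f x = (∑ i, ∑ j, Q i j * x i * x j) + ∑ i, b i * x i)
    (s : Finset (Fin n)) :
    ∀ x : Fin n → ℝ, (∀ i, x i ∈ Set.Icc (0 : ℝ) 1) →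
      ∃ p : Fin n → ℝ, (∀ i ∈ s, p i = 0 ∨ p i = 1) ∧
        (∀ i, p i ∈ Set.Icc (0 : ℝ) 1) ∧ f p ≤ f x := by
  induction s using Finset.induction_on with
  | empty => exact fun x hx => ⟨x, fun i hi => absurd hi (Finset.notMem_empty i), hx, le_refl _⟩
  | @insert a s ha ih =>
    intro x hx
    obtain ⟨p, hpbin, hpcube, hple⟩ := ih x hx
    obtain ⟨t, ht, hle⟩ := ubqp_round_one n Q hQdiag b f hf p a (hpcube a)
    refine ⟨Function.update p a t, ?_, ?_, le_trans hle hple⟩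
    · intro i hi
      rcases Finset.mem_insert.mp hi with h | h
      · subst h; rw [Function.update_self]; exact ht
      · rw [Function.update_of_ne (fun hia => ha (by rw [← hia]; exact h)) _ _]
        exact hpbin i h
    · intro i
      by_cases hia : i = a
      · subst hia; rw [Function.update_self]
        rcases ht with h | h <;> simp [h]
      · rw [Function.update_of_ne hia]; exact hpcube i

theorem ubqp_min_attained_at_vertex (n : ℕ) (Q : Matrix (Fin n) (Fin n) ℝ)
    (hQsymm : Q.IsSymm) (hQdiag : ∀ i, Q i i = 0) (b : Fin n → ℝ)
    (f : (Fin n → ℝ) → ℝ)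
    (hf : ∀ x, f x = (∑ i, ∑ j, Q i j * x i * x j) + ∑ i, b i * x i) :
    (∃ p : Fin n → ℝ, (∀ i, p i = 0 ∨ p i = 1) ∧
      ∀ x : Fin n → ℝ, (∀ i, x i ∈ Set.Icc (0 : ℝ) 1) → f p ≤ f x) ∧
    sInf (f '' {x | ∀ i, x i ∈ Set.Icc (0 : ℝ) 1}) =
      sInf (f '' {x | ∀ i, x i = 0 ∨ x i = 1}) := by
  -- finite set of vertices
  set V : Finset (Fin n → ℝ) :=
    Finset.image (fun (c : Fin n → Bool) (i : Fin n) => if c i then (1 : ℝ) else 0) Finset.univ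
    with hV
  have hVne : V.Nonempty := Finset.Nonempty.image ⟨fun _ => true, Finset.mem_univ _⟩ _
  have hVbin : ∀ p ∈ V, ∀ i, p i = 0 ∨ p i = 1 := by
    intro p hp i
    obtain ⟨c, _, hc⟩ := Finset.mem_image.mp hp
    rw [← hc]
    by_cases h : c i <;> simp [h]
  have hbinV : ∀ p : Fin n → ℝ, (∀ i, p i = 0 ∨ p i = 1) → p ∈ V := by
    intro p hp
    refine Finset.mem_image.mpr ⟨fun i => decide (p i = 1), Finset.mem_univ _, funext fun i => ?_⟩
    rcases hp i with h | h <;> simp [h]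
  obtain ⟨p, hpV, hpmin⟩ := V.exists_min_image f hVne
  have hpbin : ∀ i, p i = 0 ∨ p i = 1 := hVbin p hpV
  have hpcube : ∀ i, p i ∈ Set.Icc (0 : ℝ) 1 := by
    intro i; rcases hpbin i with h | h <;> simp [h]
  -- main minimality property
  have hmin : ∀ x : Fin n → ℝ, (∀ i, x i ∈ Set.Icc (0 : ℝ) 1) → f p ≤ f x := by
    intro x hx
    obtain ⟨q, hqbin, _, hqle⟩ :=
      ubqp_round_all n Q hQdiag b f hf Finset.univ x hx
    exact le_trans (hpmin q (hbinV q (fun i => hqbin i (Finset.mem_univ i)))) hqle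
  refine ⟨⟨p, hpbin, hmin⟩, ?_⟩
  -- sInf equality
  have hsub : {x : Fin n → ℝ | ∀ i, x i = 0 ∨ x i = 1} ⊆ {x | ∀ i, x i ∈ Set.Icc (0 : ℝ) 1} := by
    intro x hx i; rcases hx i with h | h <;> simp [h]
  have hpmemV : p ∈ {x : Fin n → ℝ | ∀ i, x i = 0 ∨ x i = 1} := hpbin
  have hlbC : ∀ y ∈ f '' {x : Fin n → ℝ | ∀ i, x i ∈ Set.Icc (0 : ℝ) 1}, f p ≤ y := by
    rintro y ⟨x, hx, rfl⟩; exact hmin x hx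
  have hbddC : BddBelow (f '' {x : Fin n → ℝ | ∀ i, x i ∈ Set.Icc (0 : ℝ) 1}) := ⟨f p, hlbC⟩
  have hbddV : BddBelow (f '' {x : Fin n → ℝ | ∀ i, x i = 0 ∨ x i = 1}) :=
    hbddC.mono (Set.image_mono hsub)
  have hCne : (f '' {x : Fin n → ℝ | ∀ i, x i ∈ Set.Icc (0 : ℝ) 1}).Nonempty :=
    ⟨f p, p, fun i => hpcube i, rfl⟩
  have hVne' : (f '' {x : Fin n → ℝ | ∀ i, x i = 0 ∨ x i = 1}).Nonempty := ⟨f p, p, hpmemV, rfl⟩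
  apply le_antisymm
  · exact le_csInf hVne' (fun y hy => csInf_le hbddC (Set.image_mono hsub hy))
  · calc sInf (f '' {x : Fin n → ℝ | ∀ i, x i = 0 ∨ x i = 1})
        ≤ f p := csInf_le hbddV ⟨p, hpmemV, rfl⟩
      _ ≤ sInf (f '' {x : Fin n → ℝ | ∀ i, x i ∈ Set.Icc (0 : ℝ) 1}) := le_csInf hCne hlbC
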